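/- Let N > 4 be even, K > 0, 0 ≤ P < 2K, and set θ₁ = arcsin(P/(2K)) and θ₂ = −θ₁. Let θ̂₁ ∈ [−π/2, θ₁] and θ̂₂ ∈ [−π/2, θ₂], and define ΔV_I = −(K N/2)·(cos θ̂₁ − cos θ₁) − (K N/2)·(cos θ̂₂ − cos θ₂) + 2K·cos θ̂₁ − (N P/4)·((θ̂₁ − θ₁) − (θ̂₂ − θ₂)) + (θ̂₁ − π/2)·P. Then ΔV_I ≥ √(4K² − P²) + P·(arcsin(P/(2K)) − π/2); that is, the energy barrier of the cyclic network is at least the energy barrier ΔV_I^T = (P/2)·(−π + 2·arcsin(P/(2K))) + √(4K² − P²) of a tree network line carrying the same line load P/2. -/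

import Mathlib

open Real

lemma mono_u (K P : ℝ) (hK : 0 < K) (hP0 : 0 ≤ P) (hP : P < 2 * K)
    (a : ℝ) (ha : a ∈ Set.Icc (-(π / 2)) (Real.arcsin (P / (2 * K)))) :
    2 * K * Real.cos a + P * a ≤
      2 * K * Real.cos (Real.arcsin (P / (2 * K))) + P * Real.arcsin (P / (2 * K)) := by
  set t := Real.arcsin (P / (2 * K)) with ht
  have hs1 : P / (2 * K) ≤ 1 := by
    rw [div_le_one (by linarith)]; linarith
  have hs0 : 0 ≤ P / (2 * K) := div_nonneg hP0 (by linarith)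
  have htle : t ≤ π / 2 := Real.arcsin_le_pi_div_two _
  have hd : ∀ x : ℝ, HasDerivAt (fun x => 2 * K * Real.cos x + P * x)
      (2 * K * (-Real.sin x) + P * 1) x := fun x =>
    ((Real.hasDerivAt_cos x).const_mul (2 * K)).add ((hasDerivAt_id x).const_mul P)
  have hmono : MonotoneOn (fun x => 2 * K * Real.cos x + P * x)
      (Set.Icc (-(π / 2)) t) := by
    apply monotoneOn_of_deriv_nonneg (convex_Icc _ _)
    · exact Continuous.continuousOn (by continuity)
    · exact fun x _ => (hd x).differentiableAt.differentiableWithinAt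
    · intro x hx
      rw [interior_Icc] at hx
      rw [(hd x).deriv]
      have hsin : Real.sin x ≤ Real.sin t := by
        apply Real.sin_le_sin_of_le_of_le_pi_div_two (by linarith [hx.1]) htle
        exact le_of_lt hx.2
      rw [Real.sin_arcsin (by linarith) hs1] at hsin
      have : 2 * K * Real.sin x ≤ 2 * K * (P / (2 * K)) :=
        mul_le_mul_of_nonneg_left hsin (by linarith)
      have h2 : 2 * K * (P / (2 * K)) = P := by field_simp
      nlinarith
  exact hmono ha (Set.right_mem_Icc.mpr (by linarith [ha.1, ha.2])) ha.2

lemma anti_v (K P : ℝ) (hK : 0 < K) (hP0 : 0 ≤ P) (hP : P < 2 * K)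
    (a : ℝ) (ha : a ∈ Set.Icc (-(π / 2)) (-Real.arcsin (P / (2 * K)))) :
    -K * Real.cos (-Real.arcsin (P / (2 * K))) + P / 2 * (-Real.arcsin (P / (2 * K))) ≤
      -K * Real.cos a + P / 2 * a := by
  set t := Real.arcsin (P / (2 * K)) with ht
  have hs1 : P / (2 * K) ≤ 1 := by
    rw [div_le_one (by linarith)]; linarith
  have hs0 : 0 ≤ P / (2 * K) := div_nonneg hP0 (by linarith)
  have htle : t ≤ π / 2 := Real.arcsin_le_pi_div_two _
  have ht0 : 0 ≤ t := Real.arcsin_nonneg.mpr hs0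
  have hd : ∀ x : ℝ, HasDerivAt (fun x => -K * Real.cos x + P / 2 * x)
      (-K * (-Real.sin x) + P / 2 * 1) x := fun x =>
    ((Real.hasDerivAt_cos x).const_mul (-K)).add ((hasDerivAt_id x).const_mul (P / 2))
  have hanti : AntitoneOn (fun x => -K * Real.cos x + P / 2 * x)
      (Set.Icc (-(π / 2)) (-t)) := by
    apply antitoneOn_of_deriv_nonpos (convex_Icc _ _)
    · exact Continuous.continuousOn (by continuity)
    · exact fun x _ => (hd x).differentiableAt.differentiableWithinAt
    · intro x hx
      rw [interior_Icc] at hx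
      rw [(hd x).deriv]
      have hsin : Real.sin x ≤ Real.sin (-t) := by
        apply Real.sin_le_sin_of_le_of_le_pi_div_two (by linarith [hx.1]) (by linarith)
        exact le_of_lt hx.2
      rw [Real.sin_neg, Real.sin_arcsin (by linarith) hs1] at hsin
      have : K * Real.sin x ≤ K * (-(P / (2 * K))) :=
        mul_le_mul_of_nonneg_left hsin (le_of_lt hK)
      have hKP : K * (-(P / (2 * K))) = -(P / 2) := by field_simp
      nlinarith
  exact hanti ha (Set.right_mem_Icc.mpr (by linarith [ha.1, ha.2])) ha.2

/-- Let `N > 4` be even, `K > 0`, `0 ≤ P < 2K`, `θ₁ = arcsin(P/(2K))`,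
`θ₂ = −θ₁`. For any `θ̂₁ ∈ [−π/2, θ₁]` and `θ̂₂ ∈ [−π/2, θ₂]`, the energy barrier
`ΔV_I = −(KN/2)(cos θ̂₁ − cos θ₁) − (KN/2)(cos θ̂₂ − cos θ₂) + 2K cos θ̂₁
  − (NP/4)((θ̂₁ − θ₁) − (θ̂₂ − θ₂)) + (θ̂₁ − π/2)P`
satisfies `ΔV_I ≥ √(4K² − P²) + P·(arcsin(P/(2K)) − π/2)`, the tree-network barrier for
the same line load `P/2`. -/
theorem cyclic_energy_barrier_ge_tree_barrier
    (N : ℕ) (hN : 4 < N) (hNeven : Even N)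
    (K P : ℝ) (hK : 0 < K) (hP0 : 0 ≤ P) (hP : P < 2 * K)
    (θh₁ θh₂ : ℝ)
    (h₁ : θh₁ ∈ Set.Icc (-(π / 2)) (Real.arcsin (P / (2 * K))))
    (h₂ : θh₂ ∈ Set.Icc (-(π / 2)) (-Real.arcsin (P / (2 * K)))) :
    -(K * (N : ℝ) / 2) * (Real.cos θh₁ - Real.cos (Real.arcsin (P / (2 * K)))) -
        (K * (N : ℝ) / 2) * (Real.cos θh₂ - Real.cos (-Real.arcsin (P / (2 * K)))) +
        2 * K * Real.cos θh₁ -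
        ((N : ℝ) * P / 4) *
          ((θh₁ - Real.arcsin (P / (2 * K))) - (θh₂ - (-Real.arcsin (P / (2 * K))))) +
        (θh₁ - π / 2) * P
      ≥ Real.sqrt (4 * K ^ 2 - P ^ 2) + P * (Real.arcsin (P / (2 * K)) - π / 2) := by
  have hA := mono_u K P hK hP0 hP θh₁ h₁
  have hB := anti_v K P hK hP0 hP θh₂ h₂
  set t := Real.arcsin (P / (2 * K)) with ht
  rw [Real.cos_neg] at hB ⊢
  have hs1 : P / (2 * K) ≤ 1 := by rw [div_le_one (by linarith)]; linarith
  have hs0 : 0 ≤ P / (2 * K) := div_nonneg hP0 (by linarith)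
  have hcos : Real.cos t = Real.sqrt (1 - (P / (2 * K)) ^ 2) := Real.cos_arcsin _
  have hsqrt : Real.sqrt (4 * K ^ 2 - P ^ 2) = 2 * K * Real.cos t := by
    rw [hcos, ← Real.sqrt_sq (by linarith : (0:ℝ) ≤ 2 * K),
      ← Real.sqrt_mul (by positivity)]
    congr 1
    field_simp
    ring
    rw [Real.sq_sqrt (by positivity)]
    ring
  rw [hsqrt]
  have hN5 : (5:ℝ) ≤ (N:ℝ) := by exact_mod_cast hN
  have hterm1 : 0 ≤ ((N:ℝ) - 4) *
      (2 * K * Real.cos t + P * t - (2 * K * Real.cos θh₁ + P * θh₁)) :=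
    mul_nonneg (by linarith) (by linarith)
  have hterm2 : 0 ≤ (N:ℝ) *
      ((-K * Real.cos θh₂ + P / 2 * θh₂) - (-K * Real.cos t + P / 2 * (-t))) :=
    mul_nonneg (by linarith) (by linarith)
  nlinarith [hterm1, hterm2]
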